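/- Let Ω ⊂ ℝ^d be an open bounded convex set and x, y, z ∈ Ω. If there exists a hyperplane π₀ that supports Ω at both b(x,y) and b(y,z), then F(x,y) + F(y,z) = F(x,z), where F is the Funk metric of Ω. -/

import Mathlib

/-- The affine hyperplane {p : ⟪ν, p⟫ = c}. -/
def hyperplane {d : ℕ} (ν : EuclideanSpace ℝ (Fin d)) (c : ℝ) :
    Set (EuclideanSpace ℝ (Fin d)) :=
  {p | (inner ℝ ν p : ℝ) = c}

/-- The hyperplane {⟪ν,·⟫ = c} (with unit normal ν) supports Ω: Ω lies in the closed
half-space {⟪ν,·⟫ ≤ c} and the hyperplane touches the closure of Ω. -/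
def IsSupporting {d : ℕ} (Ω : Set (EuclideanSpace ℝ (Fin d)))
    (ν : EuclideanSpace ℝ (Fin d)) (c : ℝ) : Prop :=
  ‖ν‖ = 1 ∧ (∀ p ∈ Ω, (inner ℝ ν p : ℝ) ≤ c) ∧ ∃ b ∈ closure Ω, (inner ℝ ν b : ℝ) = c

lemma infDist_hyperplane' {d : ℕ} {ν : EuclideanSpace ℝ (Fin d)} (hν : ‖ν‖ = 1) (c : ℝ)
    (p : EuclideanSpace ℝ (Fin d)) :
    Metric.infDist p (hyperplane ν c) = |c - inner ℝ ν p| := by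
  have hmem : p + (c - inner ℝ ν p) • ν ∈ hyperplane ν c := by
    simp only [hyperplane, Set.mem_setOf_eq, inner_add_right, real_inner_smul_right,
      real_inner_self_eq_norm_sq, hν]
    ring
  have key : ∀ q ∈ hyperplane ν c, |c - inner ℝ ν p| ≤ dist p q := by
    intro q hq
    have hq' : (inner ℝ ν q : ℝ) = c := hq
    calc |c - inner ℝ ν p| = |(inner ℝ ν (p - q) : ℝ)| := by
          rw [inner_sub_right, hq', abs_sub_comm]
      _ ≤ ‖ν‖ * ‖p - q‖ := abs_real_inner_le_norm ν (p - q)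
      _ = dist p q := by rw [hν, one_mul, dist_eq_norm]
  apply le_antisymm
  · calc Metric.infDist p (hyperplane ν c) ≤ dist p (p + (c - inner ℝ ν p) • ν) :=
        Metric.infDist_le_dist_of_mem hmem
      _ = |c - inner ℝ ν p| := by
        rw [dist_eq_norm]
        simp [norm_smul, hν]
  · by_contra h
    push_neg at h
    rw [Metric.infDist_lt_iff ⟨_, hmem⟩] at h
    obtain ⟨q, hq, hlt⟩ := h
    exact absurd (key q hq) (not_le.2 hlt)

lemma pos_of_mem' {d : ℕ} {Ω : Set (EuclideanSpace ℝ (Fin d))} (hΩo : IsOpen Ω)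
    {ν : EuclideanSpace ℝ (Fin d)} {c : ℝ} (h : IsSupporting Ω ν c)
    {p : EuclideanSpace ℝ (Fin d)} (hp : p ∈ Ω) : 0 < c - inner ℝ ν p := by
  obtain ⟨hν, hub, -⟩ := h
  rcases Metric.isOpen_iff.1 hΩo p hp with ⟨ε, hε, hball⟩
  have hmem : p + (ε/2) • ν ∈ Ω := by
    apply hball
    rw [Metric.mem_ball, dist_eq_norm]
    rw [add_sub_cancel_left, norm_smul, hν, mul_one, Real.norm_eq_abs,
      abs_of_pos (by linarith : (0:ℝ) < ε/2)]
    linarith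
  have := hub _ hmem
  rw [inner_add_right, real_inner_smul_right, real_inner_self_eq_norm_sq, hν, one_pow,
    mul_one] at this
  linarith

lemma closure_le' {d : ℕ} {Ω : Set (EuclideanSpace ℝ (Fin d))}
    {ν : EuclideanSpace ℝ (Fin d)} {c : ℝ} (h : IsSupporting Ω ν c)
    {b : EuclideanSpace ℝ (Fin d)} (hb : b ∈ closure Ω) : (inner ℝ ν b : ℝ) ≤ c := by
  obtain ⟨-, hub, -⟩ := h
  have hcl : closure Ω ⊆ {p : EuclideanSpace ℝ (Fin d) | (inner ℝ ν p : ℝ) ≤ c} := by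
    apply closure_minimal hub
    have : Continuous fun p : EuclideanSpace ℝ (Fin d) => (inner ℝ ν p : ℝ) :=
      Continuous.inner continuous_const continuous_id
    exact isClosed_le this continuous_const
  exact hcl hb

lemma sSup_eq_log' {d : ℕ} {Ω : Set (EuclideanSpace ℝ (Fin d))} (hΩo : IsOpen Ω)
    {p q : EuclideanSpace ℝ (Fin d)} (hp : p ∈ Ω) (hq : q ∈ Ω)
    {ν₀ : EuclideanSpace ℝ (Fin d)} {c₀ : ℝ} (h₀ : IsSupporting Ω ν₀ c₀) {K : ℝ}
    (hub : ∀ ν c, IsSupporting Ω ν c → c - inner ℝ ν p ≤ K * (c - inner ℝ ν q))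
    (heq : c₀ - inner ℝ ν₀ p = K * (c₀ - inner ℝ ν₀ q)) :
    sSup {r : ℝ | ∃ ν c, IsSupporting Ω ν c ∧
      r = Real.log (Metric.infDist p (hyperplane ν c) /
            Metric.infDist q (hyperplane ν c))} = Real.log K := by
  have hp₀ := pos_of_mem' hΩo h₀ hp
  have hq₀ := pos_of_mem' hΩo h₀ hq
  have hK : 0 < K := by
    by_contra hK
    push_neg at hK
    nlinarith
  have hmem : Real.log K ∈ {r : ℝ | ∃ ν c, IsSupporting Ω ν c ∧
      r = Real.log (Metric.infDist p (hyperplane ν c) /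
            Metric.infDist q (hyperplane ν c))} := by
    refine ⟨ν₀, c₀, h₀, ?_⟩
    rw [infDist_hyperplane' h₀.1, infDist_hyperplane' h₀.1,
      abs_of_pos hp₀, abs_of_pos hq₀, heq, mul_div_assoc, div_self (ne_of_gt hq₀), mul_one]
  have hbd : ∀ r ∈ {r : ℝ | ∃ ν c, IsSupporting Ω ν c ∧
      r = Real.log (Metric.infDist p (hyperplane ν c) /
            Metric.infDist q (hyperplane ν c))}, r ≤ Real.log K := by
    rintro r ⟨ν, c, hs, rfl⟩
    have hpc := pos_of_mem' hΩo hs hp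
    have hqc := pos_of_mem' hΩo hs hq
    rw [infDist_hyperplane' hs.1, infDist_hyperplane' hs.1, abs_of_pos hpc, abs_of_pos hqc]
    apply Real.log_le_log (by positivity)
    rw [div_le_iff₀ hqc]
    exact hub ν c hs
  exact le_antisymm (csSup_le ⟨_, hmem⟩ hbd) (le_csSup ⟨Real.log K, hbd⟩ hmem)

/-- Equality case of the triangle inequality for the Funk metric: if a single hyperplane π₀
supports Ω at both exit points b(x,y) and b(y,z), then F(x,y) + F(y,z) = F(x,z). -/
theorem stmt6 {d : ℕ} (Ω : Set (EuclideanSpace ℝ (Fin d)))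
    (hΩo : IsOpen Ω) (hΩb : Bornology.IsBounded Ω) (hΩc : Convex ℝ Ω)
    (F : EuclideanSpace ℝ (Fin d) → EuclideanSpace ℝ (Fin d) → ℝ)
    (hF : ∀ x y, F x y = sSup {r : ℝ | ∃ ν c, IsSupporting Ω ν c ∧
      r = Real.log (Metric.infDist x (hyperplane ν c) /
            Metric.infDist y (hyperplane ν c))})
    (x y z : EuclideanSpace ℝ (Fin d)) (hx : x ∈ Ω) (hy : y ∈ Ω) (hz : z ∈ Ω)
    (hxy : x ≠ y) (hyz : y ≠ z)
    (bxy byz : EuclideanSpace ℝ (Fin d))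
    (hbxy : bxy ∈ frontier Ω) (hbyz : byz ∈ frontier Ω)
    (t u : ℝ) (ht : 1 < t) (hu : 1 < u)
    (hbxye : bxy = x + t • (y - x)) (hbyze : byz = y + u • (z - y))
    (ν₀ : EuclideanSpace ℝ (Fin d)) (c₀ : ℝ) (hsupp : IsSupporting Ω ν₀ c₀)
    (hπxy : (inner ℝ ν₀ bxy : ℝ) = c₀) (hπyz : (inner ℝ ν₀ byz : ℝ) = c₀) :
    F x y + F y z = F x z := by
  have ht' : (0:ℝ) < t - 1 := by linarith
  have hu' : (0:ℝ) < u - 1 := by linarith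
  set K₁ : ℝ := t / (t - 1) with hK₁
  set K₂ : ℝ := u / (u - 1) with hK₂
  have hK₁pos : 0 < K₁ := by positivity
  have hK₂pos : 0 < K₂ := by positivity
  -- inner products of the boundary points
  have hin_bxy : ∀ ν : EuclideanSpace ℝ (Fin d),
      (inner ℝ ν bxy : ℝ) = inner ℝ ν x + t * (inner ℝ ν y - inner ℝ ν x) := by
    intro ν
    rw [hbxye, inner_add_right, real_inner_smul_right, inner_sub_right]
  have hin_byz : ∀ ν : EuclideanSpace ℝ (Fin d),
      (inner ℝ ν byz : ℝ) = inner ℝ ν y + u * (inner ℝ ν z - inner ℝ ν y) := by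
    intro ν
    rw [hbyze, inner_add_right, real_inner_smul_right, inner_sub_right]
  -- upper bounds for arbitrary supporting hyperplanes
  have hub_xy : ∀ ν c, IsSupporting Ω ν c → c - inner ℝ ν x ≤ K₁ * (c - inner ℝ ν y) := by
    intro ν c hs
    have hb : (inner ℝ ν bxy : ℝ) ≤ c := closure_le' hs (frontier_subset_closure hbxy)
    rw [hin_bxy] at hb
    rw [hK₁, div_mul_eq_mul_div, le_div_iff₀ ht']
    nlinarith
  have hub_yz : ∀ ν c, IsSupporting Ω ν c → c - inner ℝ ν y ≤ K₂ * (c - inner ℝ ν z) := by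
    intro ν c hs
    have hb : (inner ℝ ν byz : ℝ) ≤ c := closure_le' hs (frontier_subset_closure hbyz)
    rw [hin_byz] at hb
    rw [hK₂, div_mul_eq_mul_div, le_div_iff₀ hu']
    nlinarith
  have hub_xz : ∀ ν c, IsSupporting Ω ν c → c - inner ℝ ν x ≤ (K₁ * K₂) * (c - inner ℝ ν z) := by
    intro ν c hs
    calc c - inner ℝ ν x ≤ K₁ * (c - inner ℝ ν y) := hub_xy ν c hs
      _ ≤ K₁ * (K₂ * (c - inner ℝ ν z)) :=
        mul_le_mul_of_nonneg_left (hub_yz ν c hs) hK₁pos.le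
      _ = (K₁ * K₂) * (c - inner ℝ ν z) := by ring
  -- equalities for π₀
  have heq_xy : c₀ - inner ℝ ν₀ x = K₁ * (c₀ - inner ℝ ν₀ y) := by
    have := hπxy
    rw [hin_bxy] at this
    rw [hK₁, div_mul_eq_mul_div, eq_div_iff (ne_of_gt ht')]
    nlinarith
  have heq_yz : c₀ - inner ℝ ν₀ y = K₂ * (c₀ - inner ℝ ν₀ z) := by
    have := hπyz
    rw [hin_byz] at this
    rw [hK₂, div_mul_eq_mul_div, eq_div_iff (ne_of_gt hu')]
    nlinarith
  have heq_xz : c₀ - inner ℝ ν₀ x = (K₁ * K₂) * (c₀ - inner ℝ ν₀ z) := by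
    rw [heq_xy, heq_yz]; ring
  rw [hF x y, hF y z, hF x z,
    sSup_eq_log' hΩo hx hy hsupp hub_xy heq_xy,
    sSup_eq_log' hΩo hy hz hsupp hub_yz heq_yz,
    sSup_eq_log' hΩo hx hz hsupp hub_xz heq_xz,
    ← Real.log_mul (ne_of_gt hK₁pos) (ne_of_gt hK₂pos)]
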